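/- Let e₂ > 0, K ≥ 0, C₁ ≥ 0, and T < T′. Let b₊ : [T, T′] → (0, ∞) satisfy b₊(t) ≥ e^{(2/3)e₂(t−s)} b₊(s) for all T ≤ s ≤ t ≤ T′, and let b₋ : [T, T′] → ℝ be differentiable with |b₋′(t) + e₂·b₋(t)| ≤ K·b₊(t) for all t ∈ [T, T′] and |b₋(T)| ≤ C₁·b₊(T). Then for all t ∈ [T, T′]: |b₋(t)| ≤ (C₁ + 3K/(5e₂))·b₊(t). -/

import Mathlib

private lemma aux_inv_mul {x y z : ℝ} (hx : 0 < x) (h : x * y ≤ z) : y ≤ x⁻¹ * z := by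
  have := mul_le_mul_of_nonneg_left h (inv_nonneg.mpr hx.le)
  rwa [← mul_assoc, inv_mul_cancel₀ hx.ne', one_mul] at this

/-- Comparison estimate for the stable-mode amplitude in the escape case: if `b₊ > 0` grows
at exponential rate at least `(2/3)e₂`, `|b₋′ + e₂ b₋| ≤ K b₊`, and `|b₋(T)| ≤ C₁ b₊(T)`,
then `|b₋(t)| ≤ (C₁ + 3K/(5e₂)) b₊(t)` on `[T, T']`. -/
theorem stmt17 (e₂ K C₁ T T' : ℝ) (he₂ : 0 < e₂) (hK : 0 ≤ K) (hC₁ : 0 ≤ C₁) (hTT' : T < T')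
    (bp : ℝ → ℝ) (hbp_pos : ∀ t ∈ Set.Icc T T', 0 < bp t)
    (hbp_grow : ∀ s ∈ Set.Icc T T', ∀ t ∈ Set.Icc T T', s ≤ t →
      Real.exp (2 / 3 * e₂ * (t - s)) * bp s ≤ bp t)
    (bm bm' : ℝ → ℝ)
    (hderiv : ∀ t ∈ Set.Icc T T', HasDerivAt bm (bm' t) t)
    (hineq : ∀ t ∈ Set.Icc T T', |bm' t + e₂ * bm t| ≤ K * bp t)
    (hinit : |bm T| ≤ C₁ * bp T) :
    ∀ t ∈ Set.Icc T T', |bm t| ≤ (C₁ + 3 * K / (5 * e₂)) * bp t := by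
  intro t₀ ht₀
  obtain ⟨hTt₀, ht₀T'⟩ := ht₀
  have hsub : Set.Icc T t₀ ⊆ Set.Icc T T' := Set.Icc_subset_Icc le_rfl ht₀T'
  have hsub' : Set.Ico T t₀ ⊆ Set.Icc T T' := fun x hx => hsub (Set.Ico_subset_Icc_self hx)
  set g : ℝ → ℝ := fun τ => Real.exp (e₂ * τ) * bm τ with hgdef
  set g' : ℝ → ℝ := fun τ => Real.exp (e₂ * τ) * (bm' τ + e₂ * bm τ) with hg'def
  have hgderiv : ∀ τ ∈ Set.Icc T T', HasDerivAt g (g' τ) τ := by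
    intro τ hτ
    have hexp : HasDerivAt (fun τ => Real.exp (e₂ * τ)) (Real.exp (e₂ * τ) * e₂) τ := by
      simpa using ((hasDerivAt_id τ).const_mul e₂).exp
    have : HasDerivAt (fun x => Real.exp (e₂ * x) * bm x)
        (Real.exp (e₂ * τ) * e₂ * bm τ + Real.exp (e₂ * τ) * bm' τ) τ := hexp.mul (hderiv τ hτ)
    convert this using 1
    simp only [hg'def]; ring
  set D : ℝ := K * bp t₀ * Real.exp (-(2/3) * e₂ * t₀) with hDdef
  have hDnonneg : 0 ≤ D :=
    mul_nonneg (mul_nonneg hK (hbp_pos t₀ ⟨hTt₀, ht₀T'⟩).le) (Real.exp_pos _).le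
  set B : ℝ → ℝ := fun τ => |g T| + D * (3 / (5 * e₂)) * Real.exp (5/3 * e₂ * τ) with hBdef
  set B' : ℝ → ℝ := fun τ => D * Real.exp (5/3 * e₂ * τ) with hB'def
  have hBderiv : ∀ τ, HasDerivAt B (B' τ) τ := by
    intro τ
    have hexp : HasDerivAt (fun τ => Real.exp (5/3 * e₂ * τ))
        (Real.exp (5/3 * e₂ * τ) * (5/3 * e₂)) τ := by
      simpa using ((hasDerivAt_id τ).const_mul (5/3 * e₂)).exp
    have : HasDerivAt (fun x => |g T| + D * (3 / (5 * e₂)) * Real.exp (5/3 * e₂ * x))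
        (D * (3 / (5 * e₂)) * (Real.exp (5/3 * e₂ * τ) * (5/3 * e₂))) τ :=
      (hexp.const_mul (D * (3 / (5 * e₂)))).const_add (|g T|)
    convert this using 1
    simp only [hB'def]
    field_simp
  have hbound : ∀ τ ∈ Set.Ico T t₀, ‖g' τ‖ ≤ B' τ := by
    intro τ hτ
    have hτ' : τ ∈ Set.Icc T T' := hsub' hτ
    have h1 : |g' τ| = Real.exp (e₂ * τ) * |bm' τ + e₂ * bm τ| := by
      rw [hg'def, abs_mul, abs_of_pos (Real.exp_pos _)]
    have h2 : bp τ ≤ (Real.exp (2/3 * e₂ * (t₀ - τ)))⁻¹ * bp t₀ :=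
      aux_inv_mul (Real.exp_pos _) (hbp_grow τ hτ' t₀ ⟨hTt₀, ht₀T'⟩ hτ.2.le)
    have hE : Real.exp (-(2/3) * e₂ * t₀) * Real.exp (5/3 * e₂ * τ)
        = (Real.exp (2/3 * e₂ * (t₀ - τ)))⁻¹ * Real.exp (e₂ * τ) := by
      rw [← Real.exp_neg, ← Real.exp_add, ← Real.exp_add]
      congr 1; ring
    calc ‖g' τ‖ = Real.exp (e₂ * τ) * |bm' τ + e₂ * bm τ| := h1
      _ ≤ Real.exp (e₂ * τ) * (K * bp τ) :=
          mul_le_mul_of_nonneg_left (hineq τ hτ') (Real.exp_pos _).le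
      _ ≤ Real.exp (e₂ * τ) * (K * ((Real.exp (2/3 * e₂ * (t₀ - τ)))⁻¹ * bp t₀)) := by
          apply mul_le_mul_of_nonneg_left _ (Real.exp_pos _).le
          exact mul_le_mul_of_nonneg_left h2 hK
      _ = B' τ := by
          show _ = K * bp t₀ * Real.exp (-(2/3) * e₂ * t₀) * Real.exp (5/3 * e₂ * τ)
          rw [mul_assoc (K * bp t₀), hE]
          ring
  have hgcont : ContinuousOn g (Set.Icc T t₀) := fun τ hτ =>
    ((hgderiv τ (hsub hτ)).continuousAt).continuousWithinAt
  have key : ∀ ⦃x⦄, x ∈ Set.Icc T t₀ → ‖g x‖ ≤ B x :=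
    image_norm_le_of_norm_deriv_right_le_deriv_boundary hgcont
      (fun x hx => (hgderiv x (hsub' hx)).hasDerivWithinAt)
      (by
        show |g T| ≤ |g T| + D * (3 / (5 * e₂)) * Real.exp (5/3 * e₂ * T)
        have : 0 ≤ D * (3 / (5 * e₂)) * Real.exp (5/3 * e₂ * T) := by positivity
        linarith) hBderiv hbound
  have hkey := key (Set.right_mem_Icc.mpr hTt₀)
  have hgt₀ : ‖g t₀‖ = Real.exp (e₂ * t₀) * |bm t₀| := by
    rw [hgdef]; simp [abs_mul, abs_of_pos (Real.exp_pos _)]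
  have hTIcc : T ∈ Set.Icc T T' := ⟨le_rfl, hTT'.le⟩
  have hbpT : bp T ≤ (Real.exp (2/3 * e₂ * (t₀ - T)))⁻¹ * bp t₀ :=
    aux_inv_mul (Real.exp_pos _) (hbp_grow T hTIcc t₀ ⟨hTt₀, ht₀T'⟩ hTt₀)
  have hgT : |g T| ≤ C₁ * Real.exp (e₂ * t₀) * bp t₀ := by
    have h1 : |g T| = Real.exp (e₂ * T) * |bm T| := by
      rw [hgdef]; simp [abs_mul, abs_of_pos (Real.exp_pos _)]
    rw [h1]
    calc Real.exp (e₂ * T) * |bm T| ≤ Real.exp (e₂ * T) * (C₁ * bp T) :=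
          mul_le_mul_of_nonneg_left hinit (Real.exp_pos _).le
      _ ≤ Real.exp (e₂ * T) * (C₁ * ((Real.exp (2/3 * e₂ * (t₀ - T)))⁻¹ * bp t₀)) := by
          apply mul_le_mul_of_nonneg_left _ (Real.exp_pos _).le
          exact mul_le_mul_of_nonneg_left hbpT hC₁
      _ = C₁ * Real.exp (e₂ * T + -(2/3 * e₂ * (t₀ - T))) * bp t₀ := by
          rw [← Real.exp_neg, Real.exp_add]; ring
      _ ≤ C₁ * Real.exp (e₂ * t₀) * bp t₀ := by
          apply mul_le_mul_of_nonneg_right _ (hbp_pos t₀ ⟨hTt₀, ht₀T'⟩).le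
          apply mul_le_mul_of_nonneg_left _ hC₁
          apply Real.exp_le_exp.mpr
          nlinarith [he₂.le, hTt₀]
  have hE2 : Real.exp (-(2/3) * e₂ * t₀) * Real.exp (5/3 * e₂ * t₀) = Real.exp (e₂ * t₀) := by
    rw [← Real.exp_add]; congr 1; ring
  have hDe : D * (3 / (5 * e₂)) * Real.exp (5/3 * e₂ * t₀)
      = 3 * K / (5 * e₂) * bp t₀ * Real.exp (e₂ * t₀) := by
    rw [hDdef]
    rw [show K * bp t₀ * Real.exp (-(2/3) * e₂ * t₀) * (3 / (5 * e₂)) * Real.exp (5/3 * e₂ * t₀)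
      = K * bp t₀ * (3 / (5 * e₂)) * (Real.exp (-(2/3) * e₂ * t₀) * Real.exp (5/3 * e₂ * t₀))
      from by ring, hE2]
    ring
  have hBt₀ : B t₀ ≤ (C₁ + 3 * K / (5 * e₂)) * bp t₀ * Real.exp (e₂ * t₀) := by
    show |g T| + D * (3 / (5 * e₂)) * Real.exp (5/3 * e₂ * t₀) ≤ _
    rw [hDe]
    nlinarith [hgT]
  have hexp_pos : (0:ℝ) < Real.exp (e₂ * t₀) := Real.exp_pos _
  rw [hgt₀] at hkey
  have := hkey.trans hBt₀
  nlinarith [this]
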